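/- arXiv:1512.04155 — 5 statements merged into one kernel-verified Lean document; each statement's English description precedes it below -/
import Mathlib

section
/- Let n ≥ 2 be an integer. Let B be a symmetric real n×n matrix with trace(B) = 0 and trace(B·B) = (n−1)/n, and let C ∈ ℝⁿ be a vector such that for all indices i, j, k one has B_{ij}·C_k = B_{ik}·C_j. Then C = 0. -/
/-- Algebraic core of Lemma 2.1: a symmetric trace-free matrix `B` with
`trace (B*B) = (n-1)/n` and the relation `B i j * C k = B i k * C j` forces `C = 0`. -/
theorem stmt_0 {n : ℕ} (hn : 2 ≤ n) (B : Matrix (Fin n) (Fin n) ℝ)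
    (hsymm : B.IsSymm)
    (htr : B.trace = 0)
    (htr2 : (B * B).trace = ((n : ℝ) - 1) / n)
    (C : Fin n → ℝ)
    (hBC : ∀ i j k, B i j * C k = B i k * C j) :
    C = 0 := by
  by_contra hC
  obtain ⟨k, hk⟩ : ∃ k, C k ≠ 0 := by
    by_contra h
    push_neg at h
    exact hC (funext h)
  set v : Fin n → ℝ := fun i => B i k / C k with hv
  have hB : ∀ i j, B i j = v i * C j := by
    intro i j
    have := hBC i j k
    simp only [hv]
    field_simp
    linarith [this]
  have htr' : ∑ i, v i * C i = 0 := by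
    have : B.trace = ∑ i, v i * C i := by
      simp [Matrix.trace, Matrix.diag, hB]
    rw [this] at htr
    exact htr
  have htr2' : (B * B).trace = (∑ i, v i * C i) * (∑ i, v i * C i) := by
    rw [Matrix.trace]
    simp only [Matrix.diag, Matrix.mul_apply]
    rw [Finset.sum_mul_sum]
    rw [Finset.sum_comm]
    congr 1; ext i; congr 1; ext j
    rw [hB i j, hB j i]; ring
  rw [htr', mul_zero, htr2] at htr2'
  have hn1 : (1:ℝ) ≤ (n:ℝ) - 1 := by
    have : (2:ℝ) ≤ n := by exact_mod_cast hn
    linarith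
  have hnpos : (0:ℝ) < n := by positivity
  have : ((n:ℝ) - 1) / n > 0 := by positivity
  linarith
end

section
/- Let ι be a finite type, let a : ι → ℝ be injective, and let b : ι → ℝ be such that for all distinct t, t' ∈ ι one has a(t) + a(t') = b(t)·b(t'). Then the cardinality of ι is at most 3. -/
/-- Algebraic core of Lemma 2.2: if distinct reals `a t` and reals `b t` satisfy
`a t + a t' = b t * b t'` for all `t ≠ t'`, then there are at most 3 indices. -/
theorem stmt_1 {ι : Type*} [Fintype ι] (a b : ι → ℝ)
    (ha : Function.Injective a)
    (hab : ∀ t t', t ≠ t' → a t + a t' = b t * b t') :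
    Fintype.card ι ≤ 3 := by
  by_contra h
  push_neg at h
  obtain ⟨f⟩ : Nonempty (Fin 4 ↪ ι) := by
    rw [Function.Embedding.nonempty_iff_card_le, Fintype.card_fin]
    omega
  have hne : ∀ i j : Fin 4, i ≠ j → f i ≠ f j := fun i j hij => fun hf => hij (f.injective hf)
  have e02 := hab (f 0) (f 2) (hne 0 2 (by decide))
  have e03 := hab (f 0) (f 3) (hne 0 3 (by decide))
  have e12 := hab (f 1) (f 2) (hne 1 2 (by decide))
  have e13 := hab (f 1) (f 3) (hne 1 3 (by decide))
  have h0 : b (f 0) * (b (f 2) - b (f 3)) = a (f 2) - a (f 3) := by linarith [e02, e03, mul_sub (b (f 0)) (b (f 2)) (b (f 3))]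
  have h1 : b (f 1) * (b (f 2) - b (f 3)) = a (f 2) - a (f 3) := by linarith [e12, e13, mul_sub (b (f 1)) (b (f 2)) (b (f 3))]
  have h23 : a (f 2) - a (f 3) ≠ 0 := sub_ne_zero.mpr (fun hf => hne 2 3 (by decide) (ha hf))
  have hX : b (f 2) - b (f 3) ≠ 0 := by
    intro hX
    rw [hX, mul_zero] at h0
    exact h23 h0.symm
  have hb01 : b (f 0) = b (f 1) := by
    have := h0.trans h1.symm
    exact mul_right_cancel₀ hX this
  have ha01 : a (f 0) = a (f 1) := by
    rw [hb01] at e02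
    linarith [e02, e12]
  exact hne 0 1 (by decide) (ha ha01)
end

section
/- Let ι be a finite type with at least 3 elements, let a : ι → ℝ be injective, and let b : ι → ℝ be such that for all distinct t, t' ∈ ι one has a(t) + a(t') = b(t)·b(t'). Then b is injective and b(t) ≠ 0 for every t ∈ ι. -/
lemma third {ι : Type*} [Fintype ι] (hcard : 3 ≤ Fintype.card ι) (t t' : ι) :
    ∃ s, s ≠ t ∧ s ≠ t' := by
  classical
  have hne : ({t, t'} : Finset ι) ≠ Finset.univ := by
    intro h
    have h2 : ({t, t'} : Finset ι).card ≤ 2 :=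
      (Finset.card_insert_le _ _).trans (by simp)
    rw [h, Finset.card_univ] at h2
    omega
  obtain ⟨s, -, hs⟩ := Finset.exists_of_ssubset ((Finset.subset_univ _).ssubset_of_ne hne)
  refine ⟨s, ?_, ?_⟩ <;> simp at hs <;> tauto

/-- Intermediate claim of Lemmas 2.2/2.3: with at least 3 indices, the relation
`a t + a t' = b t * b t'` (`t ≠ t'`, `a` injective) makes `b` injective and nowhere zero. -/
theorem stmt_2 {ι : Type*} [Fintype ι] (hcard : 3 ≤ Fintype.card ι)
    (a b : ι → ℝ) (ha : Function.Injective a)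
    (hab : ∀ t t', t ≠ t' → a t + a t' = b t * b t') :
    Function.Injective b ∧ ∀ t, b t ≠ 0 := by
  constructor
  · intro t t' hb
    by_contra hne
    obtain ⟨s, hst, hst'⟩ := third hcard t t'
    have h1 := hab t s (Ne.symm hst)
    have h2 := hab t' s (Ne.symm hst')
    have : a t = a t' := by rw [hb] at h1; linarith
    exact hne (ha this)
  · intro t hbt
    obtain ⟨s, hst, -⟩ := third hcard t t
    obtain ⟨s', hs't, hs's⟩ := third hcard t s
    have h1 := hab t s (Ne.symm hst)
    have h2 := hab t s' (Ne.symm hs't)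
    rw [hbt, zero_mul] at h1 h2
    exact hs's (ha (by linarith : a s' = a s))
end

section
/- Let n and s be positive integers with s ≥ 3, let Γ : Fin n → Fin s be a surjective map (so each fiber Γ⁻¹(t) is nonempty), let a : Fin s → ℝ be injective, and let b : Fin n → ℝ be such that whenever i, j ∈ Fin n satisfy Γ(i) ≠ Γ(j) one has a(Γ(i)) + a(Γ(j)) = b(i)·b(j). Then b is constant on each fiber of Γ, i.e., Γ(i) = Γ(i') implies b(i) = b(i'). -/
/-- Step in Lemma 2.2: from `R_{ijij} = a_t + a_{t'} − b_i b_j = 0` across distinct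
Blaschke eigenspaces (`s ≥ 3` eigenvalues), `b` is constant on each eigenspace. -/
theorem stmt_4 {n s : ℕ} (hn : 0 < n) (hs : 3 ≤ s)
    (Γ : Fin n → Fin s) (hΓ : Function.Surjective Γ)
    (a : Fin s → ℝ) (ha : Function.Injective a)
    (b : Fin n → ℝ)
    (hab : ∀ i j, Γ i ≠ Γ j → a (Γ i) + a (Γ j) = b i * b j) :
    ∀ i i', Γ i = Γ i' → b i = b i' := by
  have hbne : ∀ j, b j ≠ 0 := by
    intro j hj0
    -- find two distinct eigenvalue indices different from Γ j
    have hcard : 1 < (Finset.univ.erase (Γ j)).card := by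
      rw [Finset.card_erase_of_mem (Finset.mem_univ _), Finset.card_univ, Fintype.card_fin]
      omega
    obtain ⟨t₁, ht₁, t₂, ht₂, ht12⟩ := Finset.one_lt_card.mp hcard
    have ht₁' : t₁ ≠ Γ j := Finset.ne_of_mem_erase ht₁
    have ht₂' : t₂ ≠ Γ j := Finset.ne_of_mem_erase ht₂
    obtain ⟨i₁, hi₁⟩ := hΓ t₁
    obtain ⟨i₂, hi₂⟩ := hΓ t₂
    have h1 := hab i₁ j (by rw [hi₁]; exact ht₁')
    have h2 := hab i₂ j (by rw [hi₂]; exact ht₂')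
    rw [hj0, mul_zero, hi₁] at h1
    rw [hj0, mul_zero, hi₂] at h2
    exact ht12 (ha (by linarith))
  intro i i' h
  -- pick t' ≠ Γ i
  obtain ⟨t', ht'⟩ : ∃ t', t' ≠ Γ i := by
    have : 1 < Fintype.card (Fin s) := by simp; omega
    exact Fintype.exists_ne_of_one_lt_card this (Γ i)
  obtain ⟨j, hj⟩ := hΓ t'
  have hji : Γ j ≠ Γ i := by rw [hj]; exact ht'
  have h1 := hab i j (Ne.symm hji)
  have h2 := hab i' j (by rw [← h]; exact Ne.symm hji)
  rw [← h] at h2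
  have : b i * b j = b i' * b j := by linarith
  exact mul_right_cancel₀ (hbne j) this
end

section
/- Let n, p, q be positive integers with p + q + 2 ≤ n and let r > 0. Set a = r/√(r²+1), b = √(r²+1)/r, c = (pr² + q(r²+1))/(n·r·√(r²+1)), and d = (p(n−p)r⁴ − 2pq·r²(r²+1) + q(n−q)(r²+1)²)/(n−1). Then d ≠ 0 and the three real numbers a₁ = (c² − 2ca − 1)/(2d), a₂ = (c² − 2cb − 1)/(2d), a₃ = (c² − 1)/(2d) are pairwise distinct. -/
/-- The three Blaschke eigenvalues of the warped product embedding in Theorem 3.4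
are pairwise distinct (and the conformal factor numerator `d` is nonzero). -/
theorem stmt_8 (n p q : ℕ) (hp : 0 < p) (hq : 0 < q) (hpq : p + q + 2 ≤ n)
    (r : ℝ) (hr : 0 < r) :
    let a := r / Real.sqrt (r ^ 2 + 1)
    let b := Real.sqrt (r ^ 2 + 1) / r
    let c := ((p : ℝ) * r ^ 2 + q * (r ^ 2 + 1)) / (n * r * Real.sqrt (r ^ 2 + 1))
    let d := ((p : ℝ) * ((n : ℝ) - p) * r ^ 4 - 2 * p * q * r ^ 2 * (r ^ 2 + 1)
      + q * ((n : ℝ) - q) * (r ^ 2 + 1) ^ 2) / ((n : ℝ) - 1)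
    d ≠ 0 ∧
      (c ^ 2 - 2 * c * a - 1) / (2 * d) ≠ (c ^ 2 - 2 * c * b - 1) / (2 * d) ∧
      (c ^ 2 - 2 * c * a - 1) / (2 * d) ≠ (c ^ 2 - 1) / (2 * d) ∧
      (c ^ 2 - 2 * c * b - 1) / (2 * d) ≠ (c ^ 2 - 1) / (2 * d) := by
  intro a b c d
  have hs0 : 0 < Real.sqrt (r ^ 2 + 1) := Real.sqrt_pos.mpr (by positivity)
  have hp1 : (1 : ℝ) ≤ p := by exact_mod_cast hp
  have hq1 : (1 : ℝ) ≤ q := by exact_mod_cast hq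
  have hn : (p : ℝ) + q + 2 ≤ n := by exact_mod_cast hpq
  have hrs : r < Real.sqrt (r ^ 2 + 1) := by
    rw [show r ^ 2 + 1 = r * r + 1 by ring]
    exact (Real.lt_sqrt hr.le).mpr (by nlinarith)
  have ha : 0 < a := by positivity
  have hb : 0 < b := by positivity
  have hab : a ≠ b := by
    have h1 : a < 1 := (div_lt_one hs0).mpr hrs
    have h2 : 1 < b := (one_lt_div hr).mpr hrs
    linarith
  have hc : 0 < c := by
    apply div_pos
    · nlinarith
    · have : (0:ℝ) < n := by linarith
      positivity
  have hd : 0 < d := by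
    apply div_pos
    · nlinarith [mul_nonneg (mul_nonneg (by linarith : (0:ℝ) ≤ (p:ℝ))
        (by linarith : (0:ℝ) ≤ (n:ℝ) - p - q)) (by positivity : (0:ℝ) ≤ r^4),
        mul_nonneg (mul_nonneg (by linarith : (0:ℝ) ≤ (q:ℝ))
        (by linarith : (0:ℝ) ≤ (n:ℝ) - p - q)) (by positivity : (0:ℝ) ≤ (r^2+1)^2),
        mul_pos (mul_pos (by linarith : (0:ℝ) < (p:ℝ)) (by linarith : (0:ℝ) < (q:ℝ)))
        (by norm_num : (0:ℝ) < ((r^2+1) - r^2)^2)]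
    · linarith
  have h2d : (2 : ℝ) * d ≠ 0 := by intro h; linarith
  have key : ∀ x y : ℝ, x ≠ y → x / (2 * d) ≠ y / (2 * d) := by
    intro x y hxy h
    exact hxy (mul_right_cancel₀ h2d ((div_eq_div_iff h2d h2d).mp h))
  refine ⟨hd.ne', key _ _ ?_, key _ _ ?_, key _ _ ?_⟩
  · intro h
    have : c * a = c * b := by linarith
    exact hab (mul_left_cancel₀ hc.ne' this)
  · intro h
    have : c * a = 0 := by linarith
    exact (mul_pos hc ha).ne' this
  · intro h
    have : c * b = 0 := by linarith
    exact (mul_pos hc hb).ne' this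
end
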